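/- Two nonempty convex sets C and D in R^d can be properly separated (there is an affine hyperplane h with C and D in opposite closed half-spaces determined by h, and not both C and D contained in h) if and only if the relative interiors of C and D are disjoint. -/

import Mathlib

open Set Pointwise

variable {V : Type*} [NormedAddCommGroup V] [NormedSpace ℝ V]

/-- Metric characterization of the intrinsic (relative) interior. -/
theorem mem_intrinsicInterior_iff' {s : Set V} {x : V} :
    x ∈ intrinsicInterior ℝ s ↔ x ∈ affineSpan ℝ s ∧
      ∃ ε > 0, ∀ y ∈ affineSpan ℝ s, dist y x < ε → y ∈ s := by
  constructor
  · rintro ⟨x', hx', rfl⟩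
    rw [mem_interior_iff_mem_nhds, Metric.mem_nhds_iff] at hx'
    obtain ⟨ε, hε, hball⟩ := hx'
    refine ⟨x'.2, ε, hε, fun y hy hdy => ?_⟩
    exact hball (show (⟨y, hy⟩ : affineSpan ℝ s) ∈ Metric.ball x' ε by
      simpa [Metric.mem_ball, Subtype.dist_eq] using hdy)
  · rintro ⟨hx, ε, hε, h⟩
    refine ⟨⟨x, hx⟩, ?_, rfl⟩
    rw [mem_interior_iff_mem_nhds, Metric.mem_nhds_iff]
    exact ⟨ε, hε, fun y hy => h y y.2 (by simpa [Metric.mem_ball, Subtype.dist_eq] using hy)⟩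

/-- From a relative interior point, one can move slightly past any point of the set. -/
theorem exists_prolong {s : Set V} {x y : V} (hx : x ∈ intrinsicInterior ℝ s) (hy : y ∈ s) :
    ∃ ε : ℝ, 0 < ε ∧ x + ε • (x - y) ∈ s := by
  rw [mem_intrinsicInterior_iff'] at hx
  obtain ⟨hxs, ε, hε, h⟩ := hx
  set t : ℝ := ε / (‖x - y‖ + 1) with ht
  have hnorm : (0:ℝ) < ‖x - y‖ + 1 := by positivity
  have ht0 : 0 < t := by positivity
  refine ⟨t, ht0, ?_⟩
  have hys : y ∈ affineSpan ℝ s := subset_affineSpan ℝ s hy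
  have hmem : x + t • (x - y) ∈ affineSpan ℝ s := by
    have := AffineSubspace.smul_vsub_vadd_mem (affineSpan ℝ s) t hxs hys hxs
    simpa [vsub_eq_sub, vadd_eq_add, add_comm] using this
  refine h _ hmem ?_
  have : dist (x + t • (x - y)) x = t * ‖x - y‖ := by
    rw [dist_eq_norm]
    simp [norm_smul, abs_of_pos ht0]
  rw [this, ht]
  calc ε / (‖x - y‖ + 1) * ‖x - y‖ < ε / (‖x - y‖ + 1) * (‖x - y‖ + 1) := by
        apply mul_lt_mul_of_pos_left (by linarith) (by positivity)
    _ = ε := by field_simp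

/-- Open segment from a point of `s` to a relative interior point stays in the
relative interior. -/
theorem combo_mem_intrinsicInterior {s : Set V} (hs : Convex ℝ s) {x a : V} (hx : x ∈ s)
    (ha : a ∈ intrinsicInterior ℝ s) {t : ℝ} (ht0 : 0 < t) (ht1 : t < 1) :
    t • x + (1 - t) • a ∈ intrinsicInterior ℝ s := by
  rw [mem_intrinsicInterior_iff'] at ha ⊢
  obtain ⟨has, ε, hε, h⟩ := ha
  have hxs : x ∈ affineSpan ℝ s := subset_affineSpan ℝ s hx
  have h1t : (0:ℝ) < 1 - t := by linarith
  have humem : t • x + (1 - t) • a ∈ affineSpan ℝ s := by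
    have := AffineSubspace.smul_vsub_vadd_mem (affineSpan ℝ s) t hxs has has
    have e : t • (x -ᵥ a) +ᵥ a = t • x + (1 - t) • a := by
      simp only [vsub_eq_sub, vadd_eq_add, smul_sub, sub_smul, one_smul]
      abel
    rwa [e] at this
  refine ⟨humem, (1 - t) * ε, by positivity, fun z hz hdz => ?_⟩
  set w : V := z + (t / (1 - t)) • (z - x) with hw
  have hwspan : w ∈ affineSpan ℝ s := by
    have := AffineSubspace.smul_vsub_vadd_mem (affineSpan ℝ s) (t / (1 - t)) hz hxs hz
    simpa [vsub_eq_sub, vadd_eq_add, hw, add_comm] using this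
  have hwa : w - a = (1 / (1 - t)) • (z - (t • x + (1 - t) • a)) := by
    rw [hw]
    have h1t' : (1:ℝ) - t ≠ 0 := by linarith
    match_scalars <;> field_simp <;> ring
  have hdist : dist w a < ε := by
    rw [dist_eq_norm, hwa, norm_smul]
    rw [dist_eq_norm] at hdz
    have : |1 / (1 - t)| = 1 / (1 - t) := abs_of_pos (by positivity)
    rw [Real.norm_eq_abs, this]
    calc 1 / (1 - t) * ‖z - (t • x + (1 - t) • a)‖ < 1 / (1 - t) * ((1 - t) * ε) := by
          apply mul_lt_mul_of_pos_left hdz (by positivity)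
      _ = ε := by field_simp
  have hws : w ∈ s := h w hwspan hdist
  have hzcombo : z = t • x + (1 - t) • w := by
    rw [hw]
    have h1t' : (1:ℝ) - t ≠ 0 := by linarith
    match_scalars <;> field_simp <;> ring
  rw [hzcombo]
  exact hs hx hws (le_of_lt ht0) (le_of_lt h1t) (by ring)

/-- Core: a convex set whose relative interior misses the origin admits a linear functional
nonnegative on it and positive somewhere on it. -/
theorem core_sep {E : Type*} [NormedAddCommGroup E] [NormedSpace ℝ E] [FiniteDimensional ℝ E]
    {K : Set E} (hK : Convex ℝ K) (hne : K.Nonempty)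
    (h0 : (0 : E) ∉ intrinsicInterior ℝ K) :
    ∃ f : E →L[ℝ] ℝ, (∀ k ∈ K, 0 ≤ f k) ∧ ∃ k ∈ K, 0 < f k := by
  by_cases hcl : (0 : E) ∈ closure K
  · -- the hard case: 0 in the relative boundary
    set V := affineSpan ℝ K with hV
    have h0V : (0 : E) ∈ V := by
      have : closure K ⊆ (V : Set E) :=
        closure_minimal (subset_affineSpan ℝ K) (V.closed_of_finiteDimensional)
      exact this hcl
    set W := V.direction with hW
    have hKW : ∀ k ∈ K, k ∈ W := fun k hk => by
      have := AffineSubspace.vsub_mem_direction (subset_affineSpan ℝ K hk) h0V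
      simpa using this
    set K' : Set W := (W.subtype) ⁻¹' K with hK'
    have hK'c : Convex ℝ K' := hK.linear_preimage W.subtype
    -- interior of K' is nonempty
    obtain ⟨q, hq⟩ := hne.intrinsicInterior hK
    have hqK : q ∈ K := intrinsicInterior_subset hq
    rw [mem_intrinsicInterior_iff'] at hq
    obtain ⟨hqV, ε, hε, hqball⟩ := hq
    have hqW : q ∈ W := hKW q hqK
    have hqint : (⟨q, hqW⟩ : W) ∈ interior K' := by
      refine mem_interior.2 ⟨Metric.ball ⟨q, hqW⟩ ε, ?_, Metric.isOpen_ball,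
        Metric.mem_ball_self hε⟩
      rintro ⟨z, hzW⟩ hz
      have hzV : z ∈ V := by
        have := AffineSubspace.vadd_mem_of_mem_direction hzW h0V
        simpa using this
      have : dist z q < ε := by simpa [Subtype.dist_eq] using hz
      exact hqball z hzV this
    -- 0 is not in the interior of K'
    have h0W : (0 : E) ∈ W := W.zero_mem
    have h0int : (0 : W) ∉ interior K' := by
      intro hc
      apply h0
      rw [mem_intrinsicInterior_iff']
      rw [mem_interior_iff_mem_nhds, Metric.mem_nhds_iff] at hc
      obtain ⟨δ, hδ, hball⟩ := hc
      refine ⟨h0V, δ, hδ, fun y hy hdy => ?_⟩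
      have hyW : y ∈ W := by
        have := AffineSubspace.vsub_mem_direction hy h0V
        simpa using this
      have : (⟨y, hyW⟩ : W) ∈ Metric.ball (0 : W) δ := by
        simpa [Metric.mem_ball, Subtype.dist_eq] using hdy
      exact hball this
    -- separate 0 from the open convex set interior K'
    obtain ⟨g, hg⟩ := geometric_hahn_banach_open_point hK'c.interior isOpen_interior h0int
    simp only [map_zero] at hg
    -- g is negative on interior K'; -g works on W
    have hgq : 0 < -g ⟨q, hqW⟩ := by have := hg _ hqint; linarith
    have hgK' : ∀ k' ∈ K', 0 ≤ -g k' := by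
      intro k' hk'
      by_contra hneg
      push_neg at hneg
      have hgk : 0 < g k' := by linarith
      set gq : ℝ := -g ⟨q, hqW⟩ with hgqdef
      set a : ℝ := g k' / (g k' + gq) with hadef
      set b : ℝ := gq / (g k' + gq) with hbdef
      have hden : 0 < g k' + gq := by linarith
      have ha : 0 < a := by positivity
      have hb : 0 ≤ b := by positivity
      have hab : a + b = 1 := by rw [hadef, hbdef]; field_simp
      have hzint : a • (⟨q, hqW⟩ : W) + b • k' ∈ interior K' :=
        hK'c.combo_interior_self_mem_interior hqint hk' ha hb hab
      have := hg _ hzint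
      simp only [map_add, map_smul, smul_eq_mul] at this
      have hcalc : a * g ⟨q, hqW⟩ + b * g k' = 0 := by
        rw [hadef, hbdef]
        have : g (⟨q, hqW⟩ : W) = -gq := by rw [hgqdef]; ring
        rw [this]
        field_simp
        ring
      linarith
    -- extend -g to all of E
    obtain ⟨G, hGext, -⟩ := exists_extension_norm_eq W (-g)
    refine ⟨G, fun k hk => ?_, q, hqK, ?_⟩
    · have := hGext ⟨k, hKW k hk⟩
      simp only [ContinuousLinearMap.neg_apply] at this
      rw [show k = ((⟨k, hKW k hk⟩ : W) : E) from rfl, this]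
      exact hgK' _ hk
    · have := hGext ⟨q, hqW⟩
      simp only [ContinuousLinearMap.neg_apply] at this
      rw [show q = ((⟨q, hqW⟩ : W) : E) from rfl, this]
      exact hgq
  · -- easy case: strict separation from closure
    obtain ⟨f, u, hfu, hu⟩ :=
      geometric_hahn_banach_closed_point hK.closure isClosed_closure hcl
    simp only [map_zero] at hu
    obtain ⟨k₀, hk₀⟩ := hne
    refine ⟨-f, fun k hk => ?_, k₀, hk₀, ?_⟩
    · have := hfu k (subset_closure hk)
      simp only [ContinuousLinearMap.neg_apply]
      linarith
    · have := hfu k₀ (subset_closure hk₀)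
      simp only [ContinuousLinearMap.neg_apply]
      linarith



/-- Proper Separation Theorem: two nonempty convex sets in ℝ^d can be properly separated by an
affine hyperplane iff their relative interiors are disjoint. -/
theorem proper_separation_iff_relint_disjoint (d : ℕ)
    (C D : Set (Fin d → ℝ)) (hC : C.Nonempty) (hD : D.Nonempty)
    (hCc : Convex ℝ C) (hDc : Convex ℝ D) :
    (∃ (f : (Fin d → ℝ) →ₗ[ℝ] ℝ) (c : ℝ), f ≠ 0 ∧
        (∀ x ∈ C, f x ≤ c) ∧ (∀ y ∈ D, c ≤ f y) ∧ ¬(C ∪ D ⊆ {x | f x = c})) ↔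
    intrinsicInterior ℝ C ∩ intrinsicInterior ℝ D = ∅ := by
  constructor
  · rintro ⟨f, c, -, hfC, hfD, hproper⟩
    rw [Set.eq_empty_iff_forall_notMem]
    rintro x ⟨hx1, hx2⟩
    have hxC : x ∈ C := intrinsicInterior_subset hx1
    have hxD : x ∈ D := intrinsicInterior_subset hx2
    have hfx : f x = c := le_antisymm (hfC x hxC) (hfD x hxD)
    apply hproper
    rintro z (hz | hz)
    · obtain ⟨ε, hε, hw⟩ := exists_prolong hx1 hz
      have h1 : f (x + ε • (x - z)) ≤ c := hfC _ hw
      simp only [map_add, map_smul, map_sub, smul_eq_mul, hfx] at h1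
      have : f z ≥ c := by nlinarith
      exact le_antisymm (hfC z hz) this
    · obtain ⟨ε, hε, hw⟩ := exists_prolong hx2 hz
      have h1 : c ≤ f (x + ε • (x - z)) := hfD _ hw
      simp only [map_add, map_smul, map_sub, smul_eq_mul, hfx] at h1
      have : f z ≤ c := by nlinarith
      exact le_antisymm this (hfD z hz)
  · intro hri
    obtain ⟨x₀, hx₀⟩ := hC
    obtain ⟨y₀, hy₀⟩ := hD
    set K : Set (Fin d → ℝ) := D - C with hKdef
    have hKc : Convex ℝ K := hDc.sub hCc
    have hKne : K.Nonempty := ⟨y₀ - x₀, Set.sub_mem_sub hy₀ hx₀⟩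
    have h0 : (0 : Fin d → ℝ) ∉ intrinsicInterior ℝ K := by
      intro h0m
      obtain ⟨a, ha⟩ := Set.Nonempty.intrinsicInterior hCc ⟨x₀, hx₀⟩
      obtain ⟨b, hb⟩ := Set.Nonempty.intrinsicInterior hDc ⟨y₀, hy₀⟩
      have haC : a ∈ C := intrinsicInterior_subset ha
      have hbD : b ∈ D := intrinsicInterior_subset hb
      have hpK : b - a ∈ K := Set.sub_mem_sub hbD haC
      obtain ⟨ε, hε, hw⟩ := exists_prolong h0m hpK
      have hw' : -(ε • (b - a)) ∈ K := by
        convert hw using 1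
        module
      rw [hKdef, Set.mem_sub] at hw'
      obtain ⟨y₁, hy₁, x₁, hx₁, hxy⟩ := hw'
      set t : ℝ := 1 / (1 + ε) with htdef
      have ht0 : 0 < t := by positivity
      have ht1 : t < 1 := by
        rw [htdef, div_lt_one (by linarith)]
        linarith
      have huC : t • x₁ + (1 - t) • a ∈ intrinsicInterior ℝ C :=
        combo_mem_intrinsicInterior hCc hx₁ ha ht0 ht1
      have huD : t • y₁ + (1 - t) • b ∈ intrinsicInterior ℝ D :=
        combo_mem_intrinsicInterior hDc hy₁ hb ht0 ht1
      have heq : t • x₁ + (1 - t) • a = t • y₁ + (1 - t) • b := by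
        have hy₁eq : y₁ = x₁ - ε • (b - a) := by
          have : y₁ - x₁ = -(ε • (b - a)) := hxy
          linear_combination (norm := module) this
        rw [hy₁eq]
        have h1ε : (1 : ℝ) + ε ≠ 0 := by positivity
        have ht : t * (1 + ε) = 1 := by rw [htdef]; field_simp
        match_scalars <;> nlinarith [ht]
      rw [heq] at huC
      have : t • y₁ + (1 - t) • b ∈ intrinsicInterior ℝ C ∩ intrinsicInterior ℝ D :=
        ⟨huC, huD⟩
      rw [hri] at this
      exact this
    obtain ⟨F, hF0, k₀, hk₀K, hk₀pos⟩ := core_sep hKc hKne h0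
    have hle : ∀ x ∈ C, ∀ y ∈ D, F x ≤ F y := by
      intro x hx y hy
      have := hF0 (y - x) (Set.sub_mem_sub hy hx)
      simp only [map_sub] at this
      linarith
    set c : ℝ := sInf (F '' D) with hcdef
    have hbdd : BddBelow (F '' D) := ⟨F x₀, by
      rintro r ⟨y, hy, rfl⟩
      exact hle x₀ hx₀ y hy⟩
    have hCle : ∀ x ∈ C, F x ≤ c := fun x hx =>
      le_csInf ⟨F y₀, Set.mem_image_of_mem F hy₀⟩ (by
        rintro r ⟨y, hy, rfl⟩
        exact hle x hx y hy)
    have hDge : ∀ y ∈ D, c ≤ F y := fun y hy =>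
      csInf_le hbdd (Set.mem_image_of_mem F hy)
    rw [hKdef, Set.mem_sub] at hk₀K
    obtain ⟨y₁, hy₁, x₁, hx₁, hxy⟩ := hk₀K
    have hstrict : F x₁ < F y₁ := by
      have : F (y₁ - x₁) > 0 := by rw [hxy]; exact hk₀pos
      simp only [map_sub] at this
      linarith
    refine ⟨(F : (Fin d → ℝ) →ₗ[ℝ] ℝ), c, ?_, hCle, hDge, ?_⟩
    · intro hzero
      have : F x₁ = 0 := by
        have := LinearMap.ext_iff.1 hzero x₁
        simpa using this
      have h2 : F y₁ = 0 := by
        have := LinearMap.ext_iff.1 hzero y₁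
        simpa using this
      linarith
    · intro hsub
      have h1 : F x₁ = c := hsub (Set.mem_union_left _ hx₁)
      have h2 : F y₁ = c := hsub (Set.mem_union_right _ hy₁)
      linarith
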